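/- (Main theorem, case K = ℚ.) For a rational number x, write x = p/q in lowest terms with q > 0 and define the height h(x) = max(|p|, q). For R ≥ 1 let D(R) = {x ∈ ℚ : |x| ≤ 2 and h(x) ≤ R}, and let N(R) = {x ∈ D(R) : the polynomial X³ − 3X − x is reducible (not irreducible) over ℚ}. Then there exist a constant C > 0 and R₀ ≥ 1 such that for all R ≥ R₀, card N(R) ≤ C · R^{−4/3} · card D(R). -/

import Mathlib

open Polynomial

/-- The height of a rational number `x = p/q` in lowest terms (`q > 0`):
`h(x) = max(|p|, q)`. -/
def ratHeight (x : ℚ) : ℕ := max x.num.natAbs x.den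

/-- `Dset R` is the set of rationals of absolute value at most `2` and height at most `R`. -/
def Dset (R : ℝ) : Set ℚ := {x | |x| ≤ 2 ∧ (ratHeight x : ℝ) ≤ R}

/-- `Nset R` is the set of trisection numbers in `Dset R`: those `x` for which
`X³ - 3X - x` is reducible over `ℚ`. -/
def Nset (R : ℝ) : Set ℚ :=
  {x ∈ Dset R | ¬ Irreducible (X ^ 3 - 3 * X - C x : Polynomial ℚ)}

lemma aux_coprime {a b : ℤ} (h : IsCoprime a b) : IsCoprime (a^3 - 3*a*b^2) (b^3) := by
  have h1 : IsCoprime (a^2 - 3*b^2) b := by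
    have : IsCoprime (a^2) b := (h.pow_left)
    have := this.add_mul_left_left (-3*b)
    convert this using 1; rfl; ring
  have h2 : IsCoprime (a*(a^2 - 3*b^2)) b := (h.mul_left h1)
  have h3 := h2.pow_right (n := 3)
  convert h3 using 1; ring

lemma den_cube (t : ℚ) : ((t^3 - 3*t : ℚ)).den = t.den ^ 3 := by
  set a := t.num with ha
  set b := (t.den : ℤ) with hb
  have hb0 : (0:ℤ) < b := by rw [hb]; exact_mod_cast t.pos
  have hcop : IsCoprime a b := by
    rw [Int.isCoprime_iff_gcd_eq_one]
    exact t.reduced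
  have key : (t^3 - 3*t : ℚ) = ((a^3 - 3*a*b^2 : ℤ) : ℚ) / ((b^3 : ℤ) : ℚ) := by
    have ht : (t : ℚ) = (a : ℚ) / (b : ℚ) := by
      rw [ha, hb]; exact_mod_cast (Rat.num_div_den t).symm
    have hbq : ((b:ℚ)) ≠ 0 := by exact_mod_cast hb0.ne'
    rw [ht]; push_cast; field_simp
  have hcop3 : Nat.Coprime (a^3 - 3*a*b^2).natAbs (b^3).natAbs :=
    Int.isCoprime_iff_gcd_eq_one.mp (aux_coprime hcop)
  have hden := Rat.den_div_eq_of_coprime (a := a^3 - 3*a*b^2) (b := b^3) (by positivity) hcop3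
  have h2 : ((t^3 - 3*t : ℚ).den : ℤ) = b^3 := by rw [key]; exact hden
  have : ((t^3 - 3*t : ℚ).den : ℤ) = ((t.den ^ 3 : ℕ) : ℤ) := by rw [h2, hb]; push_cast; ring
  exact_mod_cast this

lemma exists_root {x : ℚ} (h : ¬ Irreducible (X ^ 3 - 3 * X - C x : Polynomial ℚ)) :
    ∃ t : ℚ, t^3 - 3*t = x := by
  set p : Polynomial ℚ := X ^ 3 - 3 * X - C x with hp
  have hdeg : p.natDegree = 3 := by rw [hp]; compute_degree!
  have hiff := irreducible_iff_roots_eq_zero_of_degree_le_three (p := p)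
    (by rw [hdeg]; norm_num) (by rw [hdeg])
  have hr : p.roots ≠ 0 := fun h0 => h (hiff.mpr h0)
  obtain ⟨t, ht⟩ := Multiset.exists_mem_of_ne_zero hr
  have hroot := isRoot_of_mem_roots ht
  have : t ^ 3 - 3 * t - x = 0 := by
    have := hroot
    simp only [hp, IsRoot, eval_sub, eval_pow, eval_mul, eval_X, eval_C, eval_ofNat] at this
    linarith [this]
  exact ⟨t, by linarith⟩

lemma root_abs_le {t : ℚ} (h : |t^3 - 3*t| ≤ 2) : |t| ≤ 2 := by
  rw [abs_le] at *
  obtain ⟨h1, h2⟩ := h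
  constructor <;> nlinarith [sq_nonneg (t+1), sq_nonneg (t-1), sq_nonneg t]

open Classical in
noncomputable def rootOf (x : ℚ) : ℚ :=
  if h : ∃ t : ℚ, t^3 - 3*t = x then h.choose else 0

lemma rootOf_spec {x : ℚ} (h : ∃ t : ℚ, t^3 - 3*t = x) :
    (rootOf x)^3 - 3*(rootOf x) = x := by
  classical
  rw [rootOf]
  rw [dif_pos h]
  exact h.choose_spec

lemma Nset_card_bound {R : ℝ} (hR : 1 ≤ R) :
    (Nat.card (Nset R) : ℝ) ≤ 5 * R ^ ((2:ℝ)/3) := by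
  set B : ℕ := ⌊R ^ ((1:ℝ)/3)⌋₊ with hBdef
  have hR0 : (0:ℝ) < R := by linarith
  have hB1 : 1 ≤ B := by
    apply Nat.le_floor
    rw [Nat.cast_one]
    exact Real.one_le_rpow hR (by norm_num)
  set g : ℚ → ℤ × ℕ := fun t => (t.num, t.den) with hg
  set target : Finset (ℤ × ℕ) := Finset.Icc (-(2*(B:ℤ))) (2*B) ×ˢ Finset.Icc 1 B with htarget
  -- key properties of the root for x ∈ Nset R
  have hkey : ∀ x ∈ Nset R, (rootOf x)^3 - 3*(rootOf x) = x ∧ g (rootOf x) ∈ target := by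
    intro x hx
    obtain ⟨hxD, hxI⟩ := hx
    have hspec := rootOf_spec (exists_root hxI)
    set t := rootOf x with ht
    refine ⟨hspec, ?_⟩
    have habs : |t| ≤ 2 := root_abs_le (by rw [hspec]; exact hxD.1)
    have hdenR : ((x.den : ℝ)) ≤ R := le_trans (by exact_mod_cast le_max_right x.num.natAbs x.den) hxD.2
    have hden3 : x.den = t.den ^ 3 := by rw [← hspec]; exact den_cube t
    have hdenB : t.den ≤ B := by
      apply Nat.le_floor
      have h3 : ((t.den : ℝ)) ^ (3:ℕ) ≤ R := by
        rw [← Nat.cast_pow]; exact_mod_cast (by rw [← hden3]; exact hdenR)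
      calc ((t.den : ℝ)) = (((t.den:ℝ) ^ (3:ℕ)) ^ ((1:ℝ)/3)) := by
            rw [← Real.rpow_natCast (t.den : ℝ) 3, ← Real.rpow_mul (by positivity)]
            norm_num
        _ ≤ R ^ ((1:ℝ)/3) := Real.rpow_le_rpow (by positivity) h3 (by norm_num)
    have hnum : |t.num| ≤ 2 * (t.den : ℤ) := by
      have h1 : |(t.num : ℚ)| ≤ 2 * (t.den : ℚ) := by
        have h2 : (t.num : ℚ) = t * (t.den : ℚ) := by
          have hd : ((t.den : ℚ)) ≠ 0 := by positivity
          rw [← div_eq_iff hd]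
          exact Rat.num_div_den t
        rw [h2, abs_mul, abs_of_nonneg (by positivity : (0:ℚ) ≤ (t.den:ℚ))]
        have : (0:ℚ) ≤ (t.den:ℚ) := by positivity
        nlinarith [abs_nonneg t]
      exact_mod_cast h1
    simp only [htarget, Finset.mem_product, Finset.mem_Icc, hg]
    rw [abs_le] at hnum
    refine ⟨⟨by linarith [hnum.1, (by exact_mod_cast hdenB : (t.den:ℤ) ≤ (B:ℤ))],
      by linarith [hnum.2, (by exact_mod_cast hdenB : (t.den:ℤ) ≤ (B:ℤ))]⟩, t.pos, hdenB⟩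
  -- injectivity
  have hinj : Set.InjOn (g ∘ rootOf) (Nset R) := by
    intro x hx y hy hxy
    have hx' := (hkey x hx).1
    have hy' := (hkey y hy).1
    have : rootOf x = rootOf y := by
      have h1 : (rootOf x).num = (rootOf y).num := congrArg Prod.fst hxy
      have h2 : (rootOf x).den = (rootOf y).den := congrArg Prod.snd hxy
      exact Rat.ext h1 h2
    rw [← hx', ← hy', this]
  have hcard : Nat.card (Nset R) ≤ target.card := by
    calc Nat.card (Nset R) = Nat.card ((g ∘ rootOf) '' (Nset R)) :=
          (Nat.card_image_of_injOn hinj).symm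
      _ ≤ Nat.card (↑target : Set (ℤ × ℕ)) := by
          apply Nat.card_mono (target.finite_toSet)
          rintro _ ⟨x, hx, rfl⟩
          exact (hkey x hx).2
      _ = target.card := by rw [Nat.card_coe_set_eq, Set.ncard_coe_finset]
  have htc : target.card = (4*B+1) * B := by
    rw [htarget, Finset.card_product, Int.card_Icc, Nat.card_Icc]
    have : (2*(B:ℤ) + 1 - (-(2*B))) = ((4*B+1 : ℕ) : ℤ) := by push_cast; ring
    rw [this, Int.toNat_natCast, Nat.add_sub_cancel]
  have hBle : ((B:ℝ)) ≤ R ^ ((1:ℝ)/3) := Nat.floor_le (by positivity)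
  have hB2 : ((B:ℝ))^2 ≤ R ^ ((2:ℝ)/3) := by
    calc ((B:ℝ))^2 ≤ (R ^ ((1:ℝ)/3))^2 := by nlinarith [hBle, (by positivity : (0:ℝ) ≤ (B:ℝ))]
      _ = R ^ ((2:ℝ)/3) := by
          rw [← Real.rpow_natCast (R ^ ((1:ℝ)/3)) 2, ← Real.rpow_mul hR0.le]
          norm_num
  calc (Nat.card (Nset R) : ℝ) ≤ ((4*B+1) * B : ℕ) := by exact_mod_cast (htc ▸ hcard)
    _ ≤ 5 * ((B:ℝ))^2 := by
        push_cast
        have : (1:ℝ) ≤ (B:ℝ) := by exact_mod_cast hB1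
        nlinarith
    _ ≤ 5 * R ^ ((2:ℝ)/3) := by linarith

/-! ### Lower bound for `Dset` -/

def Tm (m : ℕ) : Finset ((_ : ℕ) × ℕ) := (Finset.Icc 1 m).sigma (fun q => Finset.Icc 1 q)

noncomputable def vmap : ((_ : ℕ) × ℕ) → ℚ := fun s => (s.2 : ℚ) / (s.1 : ℚ)

lemma Tm_card (m : ℕ) : (Tm m).card * 2 = m * (m + 1) := by
  rw [Tm, Finset.card_sigma]
  induction m with
  | zero => simp
  | succ n ih =>
      rw [Finset.sum_Icc_succ_top (by omega)]
      simp only [Nat.card_Icc] at *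
      rw [add_mul, ih]
      ring_nf
      omega

lemma vmap_facts {m : ℕ} {s : (_ : ℕ) × ℕ} (hs : s ∈ Tm m) :
    0 < vmap s ∧ vmap s ≤ 1 ∧ (vmap s).den ∣ s.1 := by
  simp only [Tm, Finset.mem_sigma, Finset.mem_Icc] at hs
  obtain ⟨⟨hq1, hqm⟩, hp1, hpq⟩ := hs
  have hq0 : (0:ℚ) < (s.1 : ℚ) := by exact_mod_cast hq1
  have hp0 : (0:ℚ) < (s.2 : ℚ) := by exact_mod_cast hp1
  refine ⟨div_pos hp0 hq0, (div_le_one hq0).mpr (by exact_mod_cast hpq), ?_⟩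
  have := Rat.den_dvd (s.2 : ℤ) (s.1 : ℤ)
  rw [Rat.divInt_eq_div] at this
  push_cast at this
  exact Int.ofNat_dvd.mp this

lemma num_le_den_of_le_one {x : ℚ} (hx : 0 < x) (hx1 : x ≤ 1) :
    1 ≤ x.num.natAbs ∧ x.num.natAbs ≤ x.den := by
  have hnum : 0 < x.num := Rat.num_pos.mpr hx
  have h2 : (x.num : ℚ) = x * (x.den : ℚ) := by
    have hd : ((x.den : ℚ)) ≠ 0 := by positivity
    rw [← div_eq_iff hd]
    exact Rat.num_div_den x
  have h3 : (x.num : ℚ) ≤ (x.den : ℚ) := by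
    rw [h2]
    nlinarith [(by positivity : (0:ℚ) ≤ (x.den:ℚ))]
  have h4 : x.num ≤ (x.den : ℤ) := by exact_mod_cast h3
  constructor
  · omega
  · omega

lemma mem_image_facts {m : ℕ} {x : ℚ} (hx : x ∈ (Tm m).image vmap) :
    0 < x ∧ x ≤ 1 ∧ x.den ≤ m ∧ 1 ≤ x.num.natAbs ∧ x.num.natAbs ≤ x.den := by
  obtain ⟨s, hs, rfl⟩ := Finset.mem_image.mp hx
  obtain ⟨h0, h1, hdvd⟩ := vmap_facts hs
  simp only [Tm, Finset.mem_sigma, Finset.mem_Icc] at hs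
  have hden : (vmap s).den ≤ m := le_trans (Nat.le_of_dvd (by omega) hdvd) hs.1.2
  obtain ⟨hn1, hn2⟩ := num_le_den_of_le_one h0 h1
  exact ⟨h0, h1, hden, hn1, hn2⟩

lemma fiber_card {m : ℕ} {x : ℚ} (hx : x ∈ (Tm m).image vmap) :
    ((Tm m).filter (fun s => vmap s = x)).card ≤ m / x.den := by
  classical
  have hdpos : 0 < x.den := x.pos
  refine le_trans (Finset.card_le_card_of_injOn (t := Finset.Icc 1 (m / x.den))
    (fun s => s.1 / x.den) ?_ ?_) (by rw [Nat.card_Icc, Nat.add_sub_cancel])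
  · intro s hs
    rw [Finset.mem_coe, Finset.mem_filter] at hs
    obtain ⟨hsT, hsv⟩ := hs
    have hdvd : x.den ∣ s.1 := hsv ▸ (vmap_facts hsT).2.2
    simp only [Tm, Finset.mem_sigma, Finset.mem_Icc] at hsT
    rw [Finset.mem_coe, Finset.mem_Icc]
    constructor
    · rw [Nat.one_le_div_iff hdpos]
      exact Nat.le_of_dvd (by omega) hdvd
    · exact Nat.div_le_div_right hsT.1.2
  · intro s hs s' hs' heq
    rw [Finset.coe_filter, Set.mem_setOf_eq] at hs hs'
    obtain ⟨hsT, hsv⟩ := hs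
    obtain ⟨hsT', hsv'⟩ := hs'
    have hdvd : x.den ∣ s.1 := hsv ▸ (vmap_facts hsT).2.2
    have hdvd' : x.den ∣ s'.1 := hsv' ▸ (vmap_facts hsT').2.2
    have hq : s.1 = s'.1 := by
      have := congrArg (· * x.den) heq
      simpa [Nat.div_mul_cancel hdvd, Nat.div_mul_cancel hdvd'] using this
    have hv : vmap s = vmap s' := hsv.trans hsv'.symm
    simp only [Tm, Finset.mem_sigma, Finset.mem_Icc] at hsT hsT'
    have hq0 : ((s.1 : ℚ)) ≠ 0 := by
      have : 1 ≤ s.1 := hsT.1.1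
      positivity
    have hp : s.2 = s'.2 := by
      have : (s.2 : ℚ) / (s.1 : ℚ) = (s'.2 : ℚ) / (s'.1 : ℚ) := hv
      rw [← hq] at this
      field_simp at this
      exact_mod_cast this
    exact Sigma.ext hq (heq_of_eq hp)

lemma I_card_lower {m : ℕ} (hm : 1 ≤ m) :
    ((m:ℝ))^2 / 12 ≤ (((Tm m).image vmap).card : ℝ) := by
  classical
  set I := (Tm m).image vmap with hI
  set sq := m / 4 with hsq
  -- Step 1: card Tm = sum of fibers
  have h1 : (Tm m).card = ∑ x ∈ I, ((Tm m).filter (fun s => vmap s = x)).card :=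
    Finset.card_eq_sum_card_fiberwise (fun s hs => Finset.mem_image_of_mem _ hs)
  -- Step 2: fiberwise bound
  have h2 : (Tm m).card ≤ ∑ x ∈ I, m / x.den := by
    rw [h1]; exact Finset.sum_le_sum (fun x hx => fiber_card hx)
  -- Step 3: split the sum
  have h3 : ∑ x ∈ I, m / x.den ≤ sq * m + I.card * 3 := by
    rw [← Finset.sum_filter_add_sum_filter_not I (fun x => x.den ≤ sq)]
    have hA : ∑ x ∈ I.filter (fun x => x.den ≤ sq), m / x.den ≤ sq * m := by
      set I₁ := I.filter (fun x => x.den ≤ sq) with hI₁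
      have hinj : Set.InjOn (fun x : ℚ => (⟨x.den, x.num.natAbs⟩ : (_ : ℕ) × ℕ)) I₁ := by
        intro x hx y hy hxy
        have hx' := mem_image_facts (Finset.mem_of_mem_filter x hx)
        have hy' := mem_image_facts (Finset.mem_of_mem_filter y hy)
        have hd : x.den = y.den := congrArg Sigma.fst hxy
        have hn : x.num.natAbs = y.num.natAbs := by
          have := congrArg Sigma.snd hxy; exact_mod_cast this
        have hnum : x.num = y.num := by
          have h1 : 0 < x.num := Rat.num_pos.mpr hx'.1
          have h2 : 0 < y.num := Rat.num_pos.mpr hy'.1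
          omega
        exact Rat.ext hnum hd
      have heq : ∑ x ∈ I₁, m / x.den
          = ∑ t ∈ I₁.image (fun x : ℚ => (⟨x.den, x.num.natAbs⟩ : (_ : ℕ) × ℕ)), m / t.1 := by
        rw [Finset.sum_image (fun x hx y hy => hinj hx hy)]
      rw [heq]
      have hsub : I₁.image (fun x : ℚ => (⟨x.den, x.num.natAbs⟩ : (_ : ℕ) × ℕ)) ⊆ Tm sq := by
        intro t ht
        obtain ⟨x, hx, rfl⟩ := Finset.mem_image.mp ht
        have hfacts := mem_image_facts (Finset.mem_of_mem_filter x hx)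
        have hds : x.den ≤ sq := by
          have := Finset.mem_filter.mp hx; exact this.2
        simp only [Tm, Finset.mem_sigma, Finset.mem_Icc]
        exact ⟨⟨x.pos, hds⟩, hfacts.2.2.2.1, hfacts.2.2.2.2⟩
      calc ∑ t ∈ I₁.image (fun x : ℚ => (⟨x.den, x.num.natAbs⟩ : (_ : ℕ) × ℕ)), m / t.1
          ≤ ∑ t ∈ Tm sq, m / t.1 := Finset.sum_le_sum_of_subset hsub
        _ = ∑ q ∈ Finset.Icc 1 sq, ∑ _p ∈ Finset.Icc 1 q, m / q := by
            rw [Tm, Finset.sum_sigma]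
        _ ≤ ∑ q ∈ Finset.Icc 1 sq, m := by
            apply Finset.sum_le_sum
            intro q hq
            rw [Finset.sum_const, Nat.card_Icc, Nat.add_sub_cancel, smul_eq_mul, mul_comm]
            exact Nat.div_mul_le_self m q
        _ = sq * m := by rw [Finset.sum_const, Nat.card_Icc, Nat.add_sub_cancel, smul_eq_mul]
    have hB : ∑ x ∈ I.filter (fun x => ¬ x.den ≤ sq), m / x.den
        ≤ (I.filter (fun x => ¬ x.den ≤ sq)).card * 3 := by
      apply Finset.sum_le_card_nsmul
      intro x hx
      have hden : sq + 1 ≤ x.den := by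
        have := (Finset.mem_filter.mp hx).2; omega
      calc m / x.den ≤ m / (sq + 1) := Nat.div_le_div_left hden (by omega)
        _ ≤ 3 := by
          have h4 : m < 4 * (sq + 1) := by
            have := Nat.div_add_mod m 4; omega
          have h5 : m / (sq + 1) < 4 :=
            (Nat.div_lt_iff_lt_mul (by omega)).mpr (by omega)
          omega
    have hle : (I.filter (fun x => ¬ x.den ≤ sq)).card ≤ I.card :=
      Finset.card_le_card (Finset.filter_subset _ _)
    calc _ ≤ sq * m + (I.filter (fun x => ¬ x.den ≤ sq)).card * 3 := by
          exact Nat.add_le_add hA hB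
      _ ≤ sq * m + I.card * 3 := by omega
  -- combine, in ℝ
  have hTm := Tm_card m
  have hcast : (m : ℝ) * (m + 1) ≤ 2 * (sq : ℝ) * m + 6 * I.card := by
    have : m * (m+1) ≤ 2 * (sq * m) + 6 * I.card := by
      calc m * (m+1) = (Tm m).card * 2 := hTm.symm
        _ ≤ (sq * m + I.card * 3) * 2 := by
            have := le_trans h2 h3; omega
        _ = 2 * (sq * m) + 6 * I.card := by ring
    have h6 := (Nat.cast_le (α := ℝ)).mpr this
    push_cast at h6
    linarith
  have hsqle : (sq : ℝ) ≤ (m : ℝ) / 4 := by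
    have : (sq : ℕ) ≤ m / 4 := le_of_eq hsq
    calc (sq:ℝ) = ((m/4 : ℕ) : ℝ) := by rw [hsq]
      _ ≤ (m:ℝ)/4 := by
          rw [le_div_iff₀ (by norm_num)]
          exact_mod_cast Nat.div_mul_le_self m 4
  have hm0 : (0:ℝ) ≤ (m:ℝ) := by positivity
  nlinarith [hcast, hsqle, hm0]

lemma Dset_finite (R : ℝ) : (Dset R).Finite := by
  set m := ⌊R⌋₊ with hm
  apply Set.Finite.subset
    (Set.Finite.image (fun p : ℤ × ℕ => (p.1 : ℚ) / (p.2 : ℚ))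
      ((Set.finite_Icc (-(m:ℤ)) m).prod (Set.finite_Icc 0 m)))
  intro x hx
  obtain ⟨_, hh⟩ := hx
  have hnum : x.num.natAbs ≤ m := Nat.le_floor
    (le_trans (by exact_mod_cast le_max_left x.num.natAbs x.den : ((x.num.natAbs : ℝ)) ≤ (ratHeight x : ℝ)) hh)
  have hden : x.den ≤ m := Nat.le_floor
    (le_trans (by exact_mod_cast le_max_right x.num.natAbs x.den : ((x.den : ℝ)) ≤ (ratHeight x : ℝ)) hh)
  refine ⟨(x.num, x.den), ⟨?_, ?_, ?_⟩, (Rat.num_div_den x)⟩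
  · simp only [Set.mem_Icc] at *
    omega
  · exact Nat.zero_le _
  · exact hden

lemma Dset_card_lower {R : ℝ} (hR : 2 ≤ R) : R^2 / 48 ≤ (Nat.card (Dset R) : ℝ) := by
  set m := ⌊R⌋₊ with hm
  have hm1 : 1 ≤ m := Nat.le_floor (by push_cast; linarith)
  have hmR : (m:ℝ) ≤ R := Nat.floor_le (by linarith)
  have hRm : R - 1 ≤ (m:ℝ) := by
    have := Nat.lt_floor_add_one R
    linarith
  have hsub : ↑((Tm m).image vmap) ⊆ Dset R := by
    intro x hx
    rw [Finset.mem_coe] at hx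
    obtain ⟨h0, h1, hden, hn1, hn2⟩ := mem_image_facts hx
    constructor
    · rw [abs_of_pos h0]; linarith
    · have : (ratHeight x : ℝ) ≤ (m : ℝ) := by
        have : ratHeight x ≤ m := max_le (le_trans hn2 hden) hden
        exact_mod_cast this
      linarith
  have hcard : (((Tm m).image vmap).card : ℝ) ≤ (Nat.card (Dset R) : ℝ) := by
    have := Nat.card_mono (Dset_finite R) hsub
    rw [Nat.card_coe_set_eq, Set.ncard_coe_finset] at this
    exact_mod_cast this
  have hI := I_card_lower hm1
  have h2 : R / 2 ≤ (m : ℝ) := by linarith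
  have : R^2 / 48 ≤ ((m:ℝ))^2 / 12 := by nlinarith
  linarith

/-- Main theorem for `K = ℚ`: the number of trisection numbers of height at most `R` in
`[-2, 2] ∩ ℚ` is `O(R^(-4/3))` times the number of elements of `[-2, 2] ∩ ℚ` of height
at most `R`. -/
theorem density_of_trisection_numbers_rat :
    ∃ (C : ℝ), 0 < C ∧ ∃ (R₀ : ℝ), 1 ≤ R₀ ∧
      ∀ R : ℝ, R₀ ≤ R →
        (Nat.card (Nset R) : ℝ) ≤ C * R ^ (-(4 : ℝ) / 3) * Nat.card (Dset R) := by
  refine ⟨240, by norm_num, 2, by norm_num, fun R hR => ?_⟩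
  have hR0 : (0:ℝ) < R := by linarith
  have hN := Nset_card_bound (by linarith : 1 ≤ R)
  have hD := Dset_card_lower hR
  have hrpow : R ^ (-(4:ℝ)/3) * R^2 = R ^ ((2:ℝ)/3) := by
    rw [← Real.rpow_natCast R 2, ← Real.rpow_add hR0]
    norm_num
  have hpos : (0:ℝ) < R ^ (-(4:ℝ)/3) := Real.rpow_pos_of_pos hR0 _
  calc (Nat.card (Nset R) : ℝ) ≤ 5 * R ^ ((2:ℝ)/3) := hN
    _ = 240 * R ^ (-(4:ℝ)/3) * (R^2 / 48) := by
        rw [← hrpow]; ring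
    _ ≤ 240 * R ^ (-(4:ℝ)/3) * (Nat.card (Dset R)) := by
        apply mul_le_mul_of_nonneg_left hD (by positivity)
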